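/- Let c_n be the number of closable Motzkin trees with exactly n nodes and let C = Σ_{n≥0} c_n z^n be the corresponding formal power series with rational coefficients. Then C satisfies the algebraic equation z²·C⁴ − 2z·C³ + (−z² + z + 1)·C² + (z − 1)·C + z² = 0 in the ring of formal power series. -/
import Mathlib


/-- Motzkin trees (binary-unary trees): leaf `v`, unary `l`, binary `a`. -/
inductive Mot : Type
  | v : Mot
  | l : Mot → Mot
  | a : Mot → Mot → Mot
deriving DecidableEq

/-- Lambda terms in de Bruijn form. -/
inductive Lam : Type
  | v : Nat → Lam
  | l : Lam → Lam
  | a : Lam → Lam → Lam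
deriving DecidableEq

/-- `t` is closed at depth `d`. -/
def Lam.closedAt : Lam → Nat → Prop
  | .v i, d => i < d
  | .l t, d => t.closedAt (d + 1)
  | .a s t, d => s.closedAt d ∧ t.closedAt d

/-- The Motzkin-tree skeleton of a de Bruijn term. -/
def Lam.skel : Lam → Mot
  | .v _ => .v
  | .l t => .l t.skel
  | .a s t => .a s.skel t.skel

/-- Total node count of a Motzkin tree. -/
def Mot.nodes : Mot → ℕ
  | .v => 1
  | .l t => 1 + t.nodes
  | .a s t => 1 + s.nodes + t.nodes

/-- A Motzkin tree is closable if it is the skeleton of at least one closed term. -/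
def Mot.Closable (X : Mot) : Prop := ∃ t : Lam, t.closedAt 0 ∧ t.skel = X

/-- `c n` is the number of closable Motzkin trees with exactly `n` nodes. -/
noncomputable def c (n : ℕ) : ℕ := Nat.card {t : Mot // t.nodes = n ∧ t.Closable}

/-- The ordinary generating function of the `c n`, as a formal power series over ℚ. -/
noncomputable def C : PowerSeries ℚ := PowerSeries.mk fun n => (c n : ℚ)


/-! ### Auxiliary lemmas -/

def Mot.fill : Mot → Lam
  | .v => .v 0
  | .l t => .l t.fill
  | .a s t => .a s.fill t.fill

lemma Mot.fill_closedAt : ∀ (X : Mot) (d : ℕ), 0 < d → X.fill.closedAt d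
  | .v, _, h => h
  | .l t, d, _ => t.fill_closedAt (d + 1) (Nat.succ_pos d)
  | .a s t, d, h => ⟨s.fill_closedAt d h, t.fill_closedAt d h⟩

lemma Mot.fill_skel : ∀ X : Mot, X.fill.skel = X
  | .v => rfl
  | .l t => by simp [Mot.fill, Lam.skel, t.fill_skel]
  | .a s t => by simp [Mot.fill, Lam.skel, s.fill_skel, t.fill_skel]

lemma not_closable_v : ¬ Mot.Closable .v := by
  rintro ⟨t, h1, h2⟩
  cases t with
  | v i => exact Nat.not_lt_zero i h1
  | l t => simp [Lam.skel] at h2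
  | a s t => simp [Lam.skel] at h2

lemma closable_l (s : Mot) : (Mot.l s).Closable :=
  ⟨.l s.fill, s.fill_closedAt 1 one_pos, by simp [Lam.skel, s.fill_skel]⟩

lemma closable_a {s t : Mot} : (Mot.a s t).Closable ↔ s.Closable ∧ t.Closable := by
  constructor
  · rintro ⟨u, h1, h2⟩
    cases u with
    | v i => simp [Lam.skel] at h2
    | l u => simp [Lam.skel] at h2
    | a u1 u2 =>
      simp only [Lam.skel, Mot.a.injEq] at h2
      exact ⟨⟨u1, h1.1, h2.1⟩, ⟨u2, h1.2, h2.2⟩⟩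
  · rintro ⟨⟨u1, h1, e1⟩, ⟨u2, h2, e2⟩⟩
    exact ⟨.a u1 u2, ⟨h1, h2⟩, by simp [Lam.skel, e1, e2]⟩

lemma Mot.nodes_pos : ∀ t : Mot, 0 < t.nodes
  | .v => one_pos
  | .l t => by simp [Mot.nodes]
  | .a s t => by simp [Mot.nodes]

/-! ### Finiteness -/

def decomp (n : ℕ) : {t : Mot // t.nodes ≤ n + 1} →
    Unit ⊕ {t : Mot // t.nodes ≤ n} ⊕ ({t : Mot // t.nodes ≤ n} × {t : Mot // t.nodes ≤ n})
  | ⟨.v, _⟩ => .inl ()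
  | ⟨.l s, h⟩ => .inr (.inl ⟨s, by simp [Mot.nodes] at h; omega⟩)
  | ⟨.a s t, h⟩ =>
      .inr (.inr (⟨s, by simp [Mot.nodes] at h; omega⟩, ⟨t, by simp [Mot.nodes] at h; omega⟩))

lemma decomp_inj (n : ℕ) : Function.Injective (decomp n) := by
  rintro ⟨a, ha⟩ ⟨b, hb⟩ h
  cases a <;> cases b <;> simp_all [decomp]

instance finite_le (n : ℕ) : Finite {t : Mot // t.nodes ≤ n} := by
  induction n with
  | zero =>
    have : IsEmpty {t : Mot // t.nodes ≤ 0} :=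
      ⟨fun ⟨t, h⟩ => absurd h (by simpa using (Mot.nodes_pos t).ne')⟩
    infer_instance
  | succ n _ => exact Finite.of_injective _ (decomp_inj n)

instance finite_pred (P : Mot → Prop) (n : ℕ) : Finite {t : Mot // t.nodes = n ∧ P t} :=
  Finite.of_injective (fun x => (⟨x.1, x.2.1.le⟩ : {t : Mot // t.nodes ≤ n}))
    (by rintro ⟨a, _⟩ ⟨b, _⟩ h; simpa using h)

instance finite_pairs (P : Mot → Prop) (n : ℕ) :
    Finite {p : Mot × Mot // p.1.nodes + p.2.nodes = n ∧ P p.1 ∧ P p.2} :=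
  Finite.of_injective
    (fun x => ((⟨x.1.1, by have := Mot.nodes_pos x.1.2; omega⟩,
                ⟨x.1.2, by have := Mot.nodes_pos x.1.1; omega⟩) :
      {t : Mot // t.nodes ≤ n} × {t : Mot // t.nodes ≤ n}))
    (by rintro ⟨⟨a, b⟩, _⟩ ⟨⟨a', b'⟩, _⟩ h; simp_all [Prod.ext_iff])

/-! ### Pair counting -/

def toPairs (P : Mot → Prop) (n : ℕ)
    (x : Σ i : Fin (n + 1),
      {t : Mot // t.nodes = (i : ℕ) ∧ P t} × {t : Mot // t.nodes = n - (i : ℕ) ∧ P t}) :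
    {p : Mot × Mot // p.1.nodes + p.2.nodes = n ∧ P p.1 ∧ P p.2} :=
  ⟨(x.2.1.1, x.2.2.1), by
    obtain ⟨i, ⟨s, hs1, hs2⟩, ⟨t, ht1, ht2⟩⟩ := x
    refine ⟨?_, hs2, ht2⟩
    simp only [hs1, ht1]
    omega⟩

lemma toPairs_bij (P : Mot → Prop) (n : ℕ) : Function.Bijective (toPairs P n) := by
  constructor
  · rintro ⟨i, ⟨s, hs1, hs2⟩, ⟨t, ht1, ht2⟩⟩ ⟨j, ⟨s', hs1', hs2'⟩, ⟨t', ht1', ht2'⟩⟩ h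
    simp only [toPairs, Subtype.mk.injEq, Prod.mk.injEq] at h
    obtain ⟨h1, h2⟩ := h
    have hij : i = j := Fin.ext (by rw [← hs1, ← hs1', h1])
    subst hij; subst h1; subst h2
    rfl
  · rintro ⟨⟨s, t⟩, h⟩
    obtain ⟨hsum, hp1, hp2⟩ := h
    dsimp only at hsum hp1 hp2
    have hle : s.nodes < n + 1 := by have := Mot.nodes_pos t; omega
    exact ⟨⟨⟨s.nodes, hle⟩, ⟨s, rfl, hp1⟩, ⟨t, by simp only [Fin.val_mk]; omega, hp2⟩⟩, rfl⟩

lemma card_pairs (P : Mot → Prop) (n : ℕ) :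
    Nat.card {p : Mot × Mot // p.1.nodes + p.2.nodes = n ∧ P p.1 ∧ P p.2}
      = ∑ i ∈ Finset.range (n + 1),
          Nat.card {t : Mot // t.nodes = i ∧ P t} *
            Nat.card {t : Mot // t.nodes = n - i ∧ P t} := by
  classical
  rw [← Nat.card_congr (Equiv.ofBijective _ (toPairs_bij P n))]
  letI : ∀ (i : ℕ), Fintype {t : Mot // t.nodes = i ∧ P t} := fun i => Fintype.ofFinite _
  rw [Nat.card_eq_fintype_card, Fintype.card_sigma]
  rw [← Fin.sum_univ_eq_sum_range (fun i =>
    Nat.card {t : Mot // t.nodes = i ∧ P t} * Nat.card {t : Mot // t.nodes = n - i ∧ P t})]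
  congr 1
  ext i
  rw [Fintype.card_prod]
  simp [Nat.card_eq_fintype_card]

/-! ### Motzkin numbers -/

def MTrue (_ : Mot) : Prop := True

noncomputable def m (n : ℕ) : ℕ := Nat.card {t : Mot // t.nodes = n ∧ MTrue t}

lemma m_zero : m 0 = 0 := by
  have : IsEmpty {t : Mot // t.nodes = 0 ∧ MTrue t} :=
    ⟨fun ⟨t, h⟩ => absurd h.1 (Mot.nodes_pos t).ne'⟩
  simp [m, Nat.card_of_isEmpty]

lemma c_zero : c 0 = 0 := by
  have : IsEmpty {t : Mot // t.nodes = 0 ∧ t.Closable} :=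
    ⟨fun ⟨t, h⟩ => absurd h.1 (Mot.nodes_pos t).ne'⟩
  simp [c, Nat.card_of_isEmpty]

lemma card_unitSub (n : ℕ) : Nat.card {_u : Unit // n = 0} = if n = 0 then 1 else 0 := by
  split_ifs with h
  · subst h
    have : Unique {_u : Unit // (0 : ℕ) = 0} := ⟨⟨⟨(), rfl⟩⟩, fun _ => Subtype.ext rfl⟩
    exact Nat.card_unique
  · have : IsEmpty {_u : Unit // n = 0} := ⟨fun x => h x.2⟩
    exact Nat.card_of_isEmpty

def splitM (n : ℕ) : {t : Mot // t.nodes = n + 1 ∧ MTrue t} ≃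
    {_u : Unit // n = 0} ⊕ {t : Mot // t.nodes = n ∧ MTrue t} ⊕
      {p : Mot × Mot // p.1.nodes + p.2.nodes = n ∧ MTrue p.1 ∧ MTrue p.2} where
  toFun := fun x => match x with
    | ⟨.v, h⟩ => .inl ⟨(), by have := h.1; simp [Mot.nodes] at this; omega⟩
    | ⟨.l s, h⟩ => .inr (.inl ⟨s, by
        have := h.1; simp only [Mot.nodes] at this; exact ⟨by omega, trivial⟩⟩)
    | ⟨.a s t, h⟩ => .inr (.inr ⟨(s, t), by
        have := h.1; simp only [Mot.nodes] at this
        exact ⟨show s.nodes + t.nodes = n by omega, trivial, trivial⟩⟩)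
  invFun := fun x => match x with
    | .inl ⟨_, h⟩ => ⟨.v, by simp [Mot.nodes, h], trivial⟩
    | .inr (.inl ⟨s, h⟩) => ⟨.l s, by simp only [Mot.nodes]; omega, trivial⟩
    | .inr (.inr ⟨⟨s, t⟩, h⟩) => ⟨.a s t, by
        have : s.nodes + t.nodes = n := h.1
        simp only [Mot.nodes]; omega, trivial⟩
  left_inv := fun x => match x with
    | ⟨.v, h⟩ => rfl
    | ⟨.l s, h⟩ => rfl
    | ⟨.a s t, h⟩ => rfl
  right_inv := fun x => match x with
    | .inl ⟨_, h⟩ => rfl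
    | .inr (.inl ⟨s, h⟩) => rfl
    | .inr (.inr ⟨⟨s, t⟩, h⟩) => rfl

def splitC (n : ℕ) : {t : Mot // t.nodes = n + 1 ∧ t.Closable} ≃
    {t : Mot // t.nodes = n ∧ MTrue t} ⊕
      {p : Mot × Mot // p.1.nodes + p.2.nodes = n ∧ p.1.Closable ∧ p.2.Closable} where
  toFun := fun x => match x with
    | ⟨.v, h⟩ => (not_closable_v h.2).elim
    | ⟨.l s, h⟩ => .inl ⟨s, by
        have := h.1; simp only [Mot.nodes] at this; exact ⟨by omega, trivial⟩⟩
    | ⟨.a s t, h⟩ => .inr ⟨(s, t), by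
        have := h.1; simp only [Mot.nodes] at this
        exact ⟨show s.nodes + t.nodes = n by omega, closable_a.mp h.2⟩⟩
  invFun := fun x => match x with
    | .inl ⟨s, h⟩ => ⟨.l s, by simp only [Mot.nodes]; omega, closable_l s⟩
    | .inr ⟨⟨s, t⟩, h⟩ => ⟨.a s t, by
        have : s.nodes + t.nodes = n := h.1
        simp only [Mot.nodes]; omega, closable_a.mpr h.2⟩
  left_inv := fun x => match x with
    | ⟨.v, h⟩ => (not_closable_v h.2).elim
    | ⟨.l s, h⟩ => rfl
    | ⟨.a s t, h⟩ => rfl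
  right_inv := fun x => match x with
    | .inl ⟨s, h⟩ => rfl
    | .inr ⟨⟨s, t⟩, h⟩ => rfl

lemma m_succ (n : ℕ) : m (n + 1) =
    (if n = 0 then 1 else 0) + m n + ∑ i ∈ Finset.range (n + 1), m i * m (n - i) := by
  rw [show m (n + 1) = Nat.card _ from rfl, Nat.card_congr (splitM n), Nat.card_sum,
    Nat.card_sum, card_unitSub, card_pairs MTrue n]
  simp only [m]
  ring

lemma c_succ (n : ℕ) : c (n + 1) =
    m n + ∑ i ∈ Finset.range (n + 1), c i * c (n - i) := by
  rw [show c (n + 1) = Nat.card _ from rfl, Nat.card_congr (splitC n), Nat.card_sum,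
    card_pairs Mot.Closable n]
  simp only [m, c]

/-! ### Power series -/

noncomputable def M : PowerSeries ℚ := PowerSeries.mk fun n => (m n : ℚ)

lemma hM : M = PowerSeries.X * M ^ 2 + PowerSeries.X * M + PowerSeries.X := by
  ext n
  cases n with
  | zero =>
    simp [M, m_zero, PowerSeries.coeff_zero_eq_constantCoeff, map_add, map_mul]
  | succ k =>
    rw [map_add, map_add, sq, PowerSeries.coeff_succ_X_mul, PowerSeries.coeff_succ_X_mul,
      PowerSeries.coeff_X, PowerSeries.coeff_mul]
    simp only [M, PowerSeries.coeff_mk]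
    rw [Finset.Nat.sum_antidiagonal_eq_sum_range_succ_mk, m_succ k]
    push_cast
    rcases eq_or_ne k 0 with hk | hk <;> simp [hk] <;> ring

lemma hC : C = PowerSeries.X * M + PowerSeries.X * C ^ 2 := by
  ext n
  cases n with
  | zero =>
    simp [C, M, c_zero, PowerSeries.coeff_zero_eq_constantCoeff, map_add, map_mul]
  | succ k =>
    rw [map_add, sq, PowerSeries.coeff_succ_X_mul, PowerSeries.coeff_succ_X_mul,
      PowerSeries.coeff_mul]
    simp only [C, M, PowerSeries.coeff_mk]
    rw [Finset.Nat.sum_antidiagonal_eq_sum_range_succ_mk, c_succ k]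
    push_cast
    ring

theorem stmt10 :
    (PowerSeries.X : PowerSeries ℚ) ^ 2 * C ^ 4 - 2 * PowerSeries.X * C ^ 3 +
      (-PowerSeries.X ^ 2 + PowerSeries.X + 1) * C ^ 2 +
      (PowerSeries.X - 1) * C + PowerSeries.X ^ 2 = 0 := by
  linear_combination (-(PowerSeries.X : PowerSeries ℚ)) * hM +
    (C - PowerSeries.X * C ^ 2 + PowerSeries.X * M - 1 + PowerSeries.X) * hC
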